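/- In the reduction instance: if the committee W = C₁ ∪ X (with X ⊆ C₂, |X| = ℓ−1) fails PJR for (A⃗, k), then the bipartite graph (L, R, E) contains an ℓ-by-ℓ biclique. Specifically, any witnessing voter set N* (with |N*| = j(s+1), |⋂_{i∈N*} A_i| ≥ j, |W ∩ ⋃_{i∈N*} A_i| < j for some j ≥ 1) satisfies: N* ∩ N₂ = ∅, N* contains a voter of N₁, j ≥ ℓ, |N* ∩ N₀| ≥ ℓ, and ⋂_{i∈N*} A_i ⊆ C₀; choosing ℓ voters of N* ∩ N₀ and ℓ candidates of ⋂_{i∈N*} A_i yields an ℓ-by-ℓ biclique in (L, R, E). -/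

import Mathlib

open Finset

/-- Converse direction of the reduction: if the committee W = C₁ ∪ X fails
PJR, witnessed at some level j ≥ 1 by a voter set N*, then N* ∩ N₂ = ∅,
N* contains a voter of N₁, j ≥ ℓ, |N* ∩ N₀| ≥ ℓ, the common approval set of
N* lies in C₀, and choosing ℓ voters of N* ∩ N₀ together with ℓ commonly
approved candidates yields an ℓ-by-ℓ biclique in the bipartite graph. -/
theorem reduction_pjr_failure_implies_biclique
    {V C : Type*} [Fintype V] [Fintype C] [DecidableEq V] [DecidableEq C]
    (s ℓ : ℕ) (hs : 3 ≤ s) (hℓ : 3 ≤ ℓ)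
    (N0 N1 N2 : Finset V) (C0 C1 C2 : Finset C)
    (hVpart : N0 ∪ N1 ∪ N2 = univ)
    (hN01 : Disjoint N0 N1) (hN02 : Disjoint N0 N2) (hN12 : Disjoint N1 N2)
    (hCpart : C0 ∪ C1 ∪ C2 = univ)
    (hC01 : Disjoint C0 C1) (hC02 : Disjoint C0 C2) (hC12 : Disjoint C1 C2)
    (hN0card : N0.card = s)
    (hN1card : N1.card = ℓ * (s - 1) + ℓ)
    (hN2card : N2.card = s * ℓ + ℓ - 3 * s + (ℓ - 2))
    (hC1card : C1.card = ℓ - 1)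
    (hC2card : C2.card = s * ℓ + ℓ - 3 * s + (ℓ - 2))
    (A : V → Finset C)
    (hA0 : ∀ i ∈ N0, A i ⊆ C0)
    (hA1 : ∀ i ∈ N1, A i = C0 ∪ C1)
    (hA2 : ∀ i ∈ N2, ∃ c ∈ C2, A i = {c})
    (hA2inj : ∀ i ∈ N2, ∀ j ∈ N2, A i = A j → i = j)
    (k : ℕ) (hk : k = 2 * ℓ - 2)
    (X : Finset C) (hX : X ⊆ C2) (hXcard : X.card = ℓ - 1)
    (W : Finset C) (hWdef : W = C1 ∪ X) :
    ∀ (j : ℕ) (Nstar : Finset V),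
      1 ≤ j →
      Nstar.card = j * (s + 1) →
      j ≤ (univ.filter fun c => ∀ i ∈ Nstar, c ∈ A i).card →
      (W ∩ Nstar.biUnion A).card < j →
      Nstar ∩ N2 = ∅ ∧
      (∃ i ∈ Nstar, i ∈ N1) ∧
      ℓ ≤ j ∧
      ℓ ≤ (Nstar ∩ N0).card ∧
      (univ.filter fun c => ∀ i ∈ Nstar, c ∈ A i) ⊆ C0 ∧
      ∃ (L' : Finset C) (R' : Finset V),
        L' ⊆ (univ.filter fun c => ∀ i ∈ Nstar, c ∈ A i) ∧
        R' ⊆ Nstar ∩ N0 ∧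
        L'.card = ℓ ∧ R'.card = ℓ ∧
        ∀ i ∈ R', L' ⊆ A i := by

  intro j Nstar hj hNcard hTcard hWcard
  set T := univ.filter fun c => ∀ i ∈ Nstar, c ∈ A i with hTdef
  have hTmem : ∀ c ∈ T, ∀ i ∈ Nstar, c ∈ A i := by
    intro c hc i hi
    rw [hTdef, mem_filter] at hc
    exact hc.2 i hi
  -- Step 1: Nstar ∩ N2 = ∅
  have h2 : Nstar ∩ N2 = ∅ := by
    by_contra h
    obtain ⟨i, hi⟩ := nonempty_iff_ne_empty.mpr h
    rw [mem_inter] at hi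
    obtain ⟨c, hcC2, hAi⟩ := hA2 i hi.2
    have hTsub : T ⊆ {c} := by
      intro x hx
      have := hTmem x hx i hi.1
      rw [hAi] at this; exact this
    have hT1 : T.card ≤ 1 := by
      have := card_le_card hTsub
      simpa using this
    have hj1 : j = 1 := by omega
    obtain ⟨c', hc'⟩ := card_pos.mp (by omega : 0 < T.card)
    have hc'c : c' = c := by
      have := hTmem c' hc' i hi.1
      rw [hAi, mem_singleton] at this; exact this
    have hlt : 1 < Nstar.card := by rw [hNcard, hj1, one_mul]; omega
    obtain ⟨i', hi', hne⟩ := exists_mem_ne hlt i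
    have hcAi' : c ∈ A i' := hc'c ▸ hTmem c' hc' i' hi'
    have hiu : i' ∈ N0 ∪ N1 ∪ N2 := by rw [hVpart]; exact mem_univ i'
    rcases mem_union.mp hiu with h' | h'
    · rcases mem_union.mp h' with h0 | h1
      · exact disjoint_left.mp hC02 (hA0 i' h0 hcAi') hcC2
      · have := hA1 i' h1 ▸ hcAi'
        rcases mem_union.mp this with hc0 | hc1
        · exact disjoint_left.mp hC02 hc0 hcC2
        · exact disjoint_left.mp hC12 hc1 hcC2
    · obtain ⟨c'', hc''C2, hAi'⟩ := hA2 i' h'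
      have hcc : c'' = c := by
        have := hAi' ▸ hcAi'
        rw [mem_singleton] at this; exact this.symm
      exact hne (hA2inj i' h' i hi.2 (by rw [hAi', hAi, hcc]))
  -- Nstar ⊆ N0 ∪ N1
  have hsub01 : Nstar ⊆ N0 ∪ N1 := by
    intro i hi
    have hiu : i ∈ N0 ∪ N1 ∪ N2 := by rw [hVpart]; exact mem_univ i
    rcases mem_union.mp hiu with h' | h'
    · exact h'
    · exact absurd (mem_inter.mpr ⟨hi, h'⟩) (by rw [h2]; exact notMem_empty i)
  -- Step 2: ∃ i ∈ Nstar ∩ N1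
  have hN1ex : ∃ i ∈ Nstar, i ∈ N1 := by
    by_contra h
    push_neg at h
    have hsub0 : Nstar ⊆ N0 := by
      intro i hi
      rcases mem_union.mp (hsub01 hi) with h0 | h1
      · exact h0
      · exact absurd h1 (h i hi)
    have hle : Nstar.card ≤ s := hN0card ▸ card_le_card hsub0
    rw [hNcard] at hle
    have : s + 1 ≤ j * (s + 1) := Nat.le_mul_of_pos_left _ (by omega)
    omega
  obtain ⟨i1, hi1, hi1N1⟩ := hN1ex
  -- Step 3: ℓ ≤ j
  have hC1W : C1 ⊆ W ∩ Nstar.biUnion A := by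
    intro c hc
    rw [mem_inter]
    refine ⟨by rw [hWdef]; exact mem_union_left _ hc, ?_⟩
    rw [mem_biUnion]
    exact ⟨i1, hi1, by rw [hA1 i1 hi1N1]; exact mem_union_right _ hc⟩
  have hjℓ : ℓ ≤ j := by
    have := card_le_card hC1W
    rw [hC1card] at this
    omega
  -- Step 4: ℓ ≤ (Nstar ∩ N0).card
  have hbcard : (Nstar ∩ N1).card ≤ ℓ * (s - 1) + ℓ :=
    hN1card ▸ card_le_card (inter_subset_right)
  have hkey : ℓ + (Nstar ∩ N1).card ≤ j * (s + 1) := by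
    have h1 : ℓ * (s + 1) = ℓ * (s - 1) + ℓ * 2 := by
      rw [← Nat.mul_add]; congr 1; omega
    have h2' : ℓ * (s + 1) ≤ j * (s + 1) := Nat.mul_le_mul_right _ hjℓ
    omega
  have hsplit : (Nstar ∩ N0).card + (Nstar ∩ N1).card = Nstar.card := by
    rw [← card_union_of_disjoint (disjoint_of_subset_left inter_subset_right
      (disjoint_of_subset_right inter_subset_right hN01))]
    congr 1
    rw [← inter_union_distrib_left]
    exact inter_eq_left.mpr hsub01
  have hN0ℓ : ℓ ≤ (Nstar ∩ N0).card := by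
    rw [hNcard] at hsplit
    omega
  -- Step 5: T ⊆ C0
  obtain ⟨i0, hi0⟩ := card_pos.mp (by omega : 0 < (Nstar ∩ N0).card)
  rw [mem_inter] at hi0
  have hTC0 : T ⊆ C0 := fun c hc => hA0 i0 hi0.2 (hTmem c hc i0 hi0.1)
  -- Step 6: biclique
  obtain ⟨L', hL'sub, hL'card⟩ := exists_subset_card_eq (le_trans hjℓ hTcard)
  obtain ⟨R', hR'sub, hR'card⟩ := exists_subset_card_eq hN0ℓ
  exact ⟨h2, ⟨i1, hi1, hi1N1⟩, hjℓ, hN0ℓ, hTC0, L', R', hL'sub, hR'sub,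
    hL'card, hR'card, fun i hiR c hcL =>
      hTmem c (hL'sub hcL) i (mem_inter.mp (hR'sub hiR)).1⟩
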